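/- Let α > 0 with α ≠ 1. Then φ_α(s) := s^{1−α}·√(1 − s^{2α}) + (1 − α)·(1 − s^{2α})·∫_s^1 u^{−α}(1 − u^{2α})^{−1/2} du tends to C_α := √π · Γ((1+α)/(2α)) / Γ(1/(2α)) as s → 0⁺. -/

import Mathlib

open Real MeasureTheory intervalIntegral Filter Set

namespace FermiAux

lemma bern {α : ℝ} (hα : 0 < α) {u : ℝ} (hu0 : 0 ≤ u) (hu1 : u ≤ 1) :
    min 1 (2*α) * (1 - u) ≤ 1 - u ^ (2*α) := by
  rcases le_total 1 (2*α) with h | h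
  · rw [min_eq_left h]
    have : u ^ (2*α) ≤ u := by
      rcases eq_or_lt_of_le hu0 with h0 | h0
      · rw [← h0, Real.zero_rpow (by positivity)]
      · calc u ^ (2*α) ≤ u ^ (1:ℝ) := Real.rpow_le_rpow_of_exponent_ge h0 hu1 h
          _ = u := Real.rpow_one u
    linarith
  · rw [min_eq_right h]
    have hb := rpow_one_add_le_one_add_mul_self (s := u - 1) (by linarith)
      (p := 2*α) (by positivity) h
    have : (1 + (u-1) : ℝ) = u := by ring
    rw [this] at hb
    nlinarith

lemma intG {α : ℝ} (hα : 0 < α) :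
    IntegrableOn (fun u : ℝ => (1 - u ^ (2*α)) ^ (-(1:ℝ)/2)) (Icc 0 1) := by
  set m := min 1 (2*α) with hm
  have hm0 : 0 < m := lt_min one_pos (by positivity)
  have hmaj : IntegrableOn (fun u : ℝ => m ^ (-(1:ℝ)/2) * (1 - u) ^ (-(1:ℝ)/2)) (Icc 0 1) := by
    have h1 : IntervalIntegrable (fun u : ℝ => (1 - u) ^ (-(1:ℝ)/2)) volume 0 1 := by
      have := (intervalIntegral.intervalIntegrable_rpow'
        (a := (1:ℝ)) (b := (0:ℝ)) (by norm_num : (-1:ℝ) < -(1:ℝ)/2)).comp_sub_left 1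
      simpa using this
    exact (intervalIntegrable_iff_integrableOn_Icc_of_le zero_le_one).mp (h1.const_mul _)
  refine Integrable.mono' hmaj ?_ ?_
  · apply Measurable.aestronglyMeasurable
    fun_prop
  · filter_upwards [ae_restrict_mem measurableSet_Icc] with u hu
    have hb := bern hα hu.1 hu.2
    have h0 : (0:ℝ) ≤ 1 - u ^ (2*α) := le_trans (by nlinarith [hu.2]) hb
    rw [Real.norm_eq_abs, abs_of_nonneg (Real.rpow_nonneg h0 _)]
    rcases eq_or_lt_of_le hu.2 with h1 | h1
    · subst h1
      simp [Real.one_rpow, Real.zero_rpow (by norm_num : (-(1:ℝ)/2) ≠ 0)]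
    · have hpos : 0 < m * (1 - u) := by
        apply mul_pos hm0; linarith
      calc (1 - u ^ (2*α)) ^ (-(1:ℝ)/2) ≤ (m * (1-u)) ^ (-(1:ℝ)/2) :=
            Real.rpow_le_rpow_of_nonpos hpos hb (by norm_num)
        _ = m ^ (-(1:ℝ)/2) * (1-u) ^ (-(1:ℝ)/2) :=
            Real.mul_rpow hm0.le (by linarith)

lemma intG2 {α : ℝ} (hα : 0 < α) :
    IntegrableOn (fun u : ℝ => u ^ α * (1 - u ^ (2*α)) ^ (-(1:ℝ)/2)) (Icc 0 1) :=
  (intG hα).continuousOn_mul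
    (fun x _ => (Real.continuousAt_rpow_const x α (Or.inr hα.le)).continuousWithinAt)
    isCompact_Icc

lemma intervalIntG2 {α : ℝ} (hα : 0 < α) {s : ℝ} (hs0 : 0 ≤ s) (hs1 : s ≤ 1) :
    IntervalIntegrable (fun u : ℝ => u ^ α * (1 - u ^ (2*α)) ^ (-(1:ℝ)/2)) volume s 1 :=
  (intervalIntegrable_iff_integrableOn_Icc_of_le hs1).mpr
    ((intG2 hα).mono_set (Icc_subset_Icc hs0 le_rfl))

lemma intervalIntG1 {α : ℝ} (hα : 0 < α) {s : ℝ} (hs0 : 0 < s) (hs1 : s ≤ 1) :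
    IntervalIntegrable (fun u : ℝ => u ^ (-α) * (1 - u ^ (2*α)) ^ (-(1:ℝ)/2)) volume s 1 :=
  (intervalIntegrable_iff_integrableOn_Icc_of_le hs1).mpr
    (((intG hα).mono_set (Icc_subset_Icc hs0.le le_rfl)).continuousOn_mul
      (fun x hx => (Real.continuousAt_rpow_const x (-α)
        (Or.inl (ne_of_gt (lt_of_lt_of_le hs0 hx.1)))).continuousWithinAt)
      isCompact_Icc)

lemma derivH {α : ℝ} (hα : 0 < α) {x : ℝ} (hx : x ∈ Ioo (0:ℝ) 1) :
    HasDerivAt (fun u : ℝ => u ^ (1-α) * Real.sqrt (1 - u ^ (2*α)))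
      ((1-α) * (x ^ (-α) * (1 - x ^ (2*α)) ^ (-(1:ℝ)/2))
        - x ^ α * (1 - x ^ (2*α)) ^ (-(1:ℝ)/2)) x := by
  obtain ⟨hx0, hx1⟩ := hx
  have hw : x ^ (2*α) < 1 := Real.rpow_lt_one hx0.le hx1 (by positivity)
  have hw0 : 0 < x ^ (2*α) := Real.rpow_pos_of_pos hx0 _
  have h1 : HasDerivAt (fun u : ℝ => u ^ (1-α)) ((1-α) * x ^ (1-α-1)) x :=
    Real.hasDerivAt_rpow_const (Or.inl hx0.ne')
  have h2 : HasDerivAt (fun u : ℝ => 1 - u ^ (2*α)) (-(2*α * x ^ (2*α-1))) x := by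
    simpa using (Real.hasDerivAt_rpow_const (p := 2*α) (Or.inl hx0.ne')).const_sub 1
  have h3 := h2.sqrt (by nlinarith : (0:ℝ) < 1 - x ^ (2*α)).ne'
  have h4 := h1.mul h3
  refine HasDerivAt.congr_deriv h4 ?_
  symm
  set A := Real.sqrt (1 - x ^ (2*α)) with hA
  have hApos : 0 < A := Real.sqrt_pos.mpr (by linarith)
  have hA2 : A ^ 2 = 1 - x ^ (2*α) := Real.sq_sqrt (by linarith)
  have hr : (1 - x ^ (2*α)) ^ (-(1:ℝ)/2) = A⁻¹ := by
    rw [show (-(1:ℝ)/2) = -(1/2 : ℝ) by norm_num, Real.rpow_neg (by linarith),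
      ← Real.sqrt_eq_rpow]
  have he1 : x ^ (1-α-1) = x ^ (-α) := by rw [show (1-α-1 : ℝ) = -α by ring]
  have he2 : x ^ (1-α) = x * x ^ (-α) := by
    rw [show (1-α : ℝ) = 1 + -α by ring, Real.rpow_add hx0, Real.rpow_one]
  have he3 : x ^ (2*α-1) = x ^ (2*α) * x⁻¹ := by
    rw [show (2*α-1 : ℝ) = 2*α + (-1) by ring, Real.rpow_add hx0, Real.rpow_neg_one]
  have he4 : x ^ α = x ^ (2*α) * x ^ (-α) := by
    rw [← Real.rpow_add hx0]; congr 1; ring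
  rw [hr, he1, he2, he3, he4]
  have hxne : x ≠ 0 := hx0.ne'
  have hAne : A ≠ 0 := hApos.ne'
  field_simp
  ring_nf
  rw [show (α*2 : ℝ) = 2*α from mul_comm α 2]
  linear_combination (α-1) * hA2

lemma ftc {α : ℝ} (hα : 0 < α) {s : ℝ} (hs : s ∈ Ioo (0:ℝ) 1) :
    (1-α) * ∫ u in s..1, u ^ (-α) * (1 - u ^ (2*α)) ^ (-(1:ℝ)/2)
      = (∫ u in s..1, u ^ α * (1 - u ^ (2*α)) ^ (-(1:ℝ)/2))
        - s ^ (1-α) * Real.sqrt (1 - s ^ (2*α)) := by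
  have hI1 := intervalIntG1 hα hs.1 hs.2.le
  have hI2 := intervalIntG2 hα hs.1.le hs.2.le
  have hcont : ContinuousOn (fun u : ℝ => u ^ (1-α) * Real.sqrt (1 - u ^ (2*α))) (Icc s 1) := by
    apply ContinuousOn.mul
    · exact fun x hx => (Real.continuousAt_rpow_const x (1-α)
        (Or.inl (ne_of_gt (lt_of_lt_of_le hs.1 hx.1)))).continuousWithinAt
    · exact Real.continuous_sqrt.comp_continuousOn (continuousOn_const.sub
        (fun x _ => (Real.continuousAt_rpow_const x (2*α)
          (Or.inr (by positivity))).continuousWithinAt))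
  have hftc := integral_eq_sub_of_hasDeriv_right_of_le hs.2.le hcont
    (f' := fun x => (1-α) * (x ^ (-α) * (1 - x ^ (2*α)) ^ (-(1:ℝ)/2))
        - x ^ α * (1 - x ^ (2*α)) ^ (-(1:ℝ)/2))
    (fun x hx => (derivH hα ⟨lt_trans hs.1 hx.1, hx.2⟩).hasDerivWithinAt)
    (((hI1.const_mul (1-α)).sub hI2))
  rw [intervalIntegral.integral_sub (hI1.const_mul _) hI2,
    intervalIntegral.integral_const_mul] at hftc
  have h1 : (1:ℝ) ^ (1-α) * Real.sqrt (1 - (1:ℝ) ^ (2*α)) = 0 := by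
    simp [Real.one_rpow]
  rw [h1] at hftc
  linarith

lemma realBeta {a b : ℝ} (ha : 0 < a) (hb : 0 < b) :
    ∫ x in (0:ℝ)..1, x ^ (a-1) * (1-x) ^ (b-1)
      = Real.Gamma a * Real.Gamma b / Real.Gamma (a+b) := by
  have key := Complex.Gamma_mul_Gamma_eq_betaIntegral
    (s := (a : ℂ)) (t := (b : ℂ)) (by simpa using ha) (by simpa using hb)
  have hbeta : Complex.betaIntegral (a : ℂ) (b : ℂ)
      = ((∫ x in (0:ℝ)..1, x ^ (a-1) * (1-x) ^ (b-1) : ℝ) : ℂ) := by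
    rw [Complex.betaIntegral, ← intervalIntegral.integral_ofReal]
    apply intervalIntegral.integral_congr
    intro x hx
    rw [uIcc_of_le zero_le_one] at hx
    push_cast
    rw [Complex.ofReal_cpow hx.1, Complex.ofReal_cpow (by linarith [hx.2] : (0:ℝ) ≤ 1 - x)]
    push_cast
    ring
  rw [hbeta, ← Complex.ofReal_add, Complex.Gamma_ofReal, Complex.Gamma_ofReal,
    Complex.Gamma_ofReal, ← Complex.ofReal_mul, ← Complex.ofReal_mul] at key
  have hreal : Real.Gamma a * Real.Gamma b
      = Real.Gamma (a+b) * ∫ x in (0:ℝ)..1, x ^ (a-1) * (1-x) ^ (b-1) := by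
    exact_mod_cast key
  have hne : Real.Gamma (a+b) ≠ 0 := (Real.Gamma_pos_of_pos (by linarith)).ne'
  field_simp [hreal]
  rw [hreal]; ring

lemma eqOnAux {α : ℝ} (hα : 0 < α) (hα1 : α ≠ 1) :
    EqOn (fun u : ℝ => (2*α * u ^ (2*α-1)) • ((fun t : ℝ => t ^ ((1-α)/(2*α)) * (1-t) ^ (-(1:ℝ)/2)) ∘ (fun u : ℝ => u ^ (2*α))) u)
      (fun u : ℝ => 2*α * (u ^ α * (1 - u ^ (2*α)) ^ (-(1:ℝ)/2))) (Icc 0 1) := by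
  set q : ℝ := (1-α)/(2*α) with hq
  have hqne : q ≠ 0 := by
    rw [hq]; intro h
    rcases div_eq_zero_iff.mp h with h' | h'
    · exact hα1 (by linarith)
    · nlinarith
  intro u hu
  simp only [Function.comp_apply, smul_eq_mul]
  rcases eq_or_lt_of_le hu.1 with h0 | h0
  · rw [← h0]
    rw [Real.zero_rpow (by positivity : (2*α : ℝ) ≠ 0), Real.zero_rpow hqne,
      Real.zero_rpow hα.ne']
    ring
  · have e1 : (u ^ (2*α)) ^ q = u ^ (1-α) := by
      rw [← Real.rpow_mul h0.le]
      congr 1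
      rw [hq]
      field_simp
    have e2 : u ^ (2*α-1) * u ^ (1-α) = u ^ α := by
      rw [← Real.rpow_add h0]; congr 1; ring
    rw [e1]
    rw [mul_assoc, ← mul_assoc (u ^ (2*α-1)), e2]

lemma value {α : ℝ} (hα : 0 < α) (hα1 : α ≠ 1) :
    ∫ u in (0:ℝ)..1, u ^ α * (1 - u ^ (2*α)) ^ (-(1:ℝ)/2)
      = Real.sqrt π * Real.Gamma ((1 + α) / (2 * α)) / Real.Gamma (1 / (2 * α)) := by
  set q : ℝ := (1-α)/(2*α) with hq
  have hq1 : -1 < q := by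
    rw [hq, lt_div_iff₀ (by positivity : (0:ℝ) < 2*α)]
    nlinarith
  have hqne : q ≠ 0 := by
    rw [hq]; intro h
    have := div_eq_zero_iff.mp h
    rcases this with h' | h'
    · exact hα1 (by linarith)
    · nlinarith
  have hsub : ∫ u in (0:ℝ)..1, (2*α * u ^ (2*α-1)) • ((fun t : ℝ => t ^ q * (1-t) ^ (-(1:ℝ)/2)) ∘ (fun u : ℝ => u ^ (2*α))) u
      = ∫ t in ((0:ℝ) ^ (2*α))..((1:ℝ) ^ (2*α)), t ^ q * (1-t) ^ (-(1:ℝ)/2) := by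
    apply intervalIntegral.integral_comp_smul_deriv'''
    · exact fun x _ => (Real.continuousAt_rpow_const x (2*α)
        (Or.inr (by positivity))).continuousWithinAt
    · intro x hx
      rw [min_eq_left zero_le_one, max_eq_right zero_le_one] at hx
      exact ((Real.hasDerivAt_rpow_const (p := 2*α) (Or.inl (ne_of_gt hx.1)))).hasDerivWithinAt
    · have himg : (fun u : ℝ => u ^ (2*α)) '' Ioo (min 0 1) (max 0 1) ⊆ Ioo 0 1 := by
        rw [min_eq_left zero_le_one, max_eq_right zero_le_one]
        rintro t ⟨u, hu, rfl⟩
        exact ⟨Real.rpow_pos_of_pos hu.1 _, Real.rpow_lt_one hu.1.le hu.2 (by positivity)⟩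
      refine ContinuousOn.mono ?_ himg
      apply ContinuousOn.mul
      · exact fun x hx => (Real.continuousAt_rpow_const x q
          (Or.inl (ne_of_gt hx.1))).continuousWithinAt
      · exact fun x hx => ((continuous_const.sub continuous_id).continuousAt.rpow_const
          (Or.inl (by intro h; change (1:ℝ) - x = 0 at h; nlinarith [hx.2]))).continuousWithinAt
    · have himg : (fun u : ℝ => u ^ (2*α)) '' (Set.uIcc (0:ℝ) 1) ⊆ Icc 0 1 := by
        rw [uIcc_of_le zero_le_one]
        rintro t ⟨u, hu, rfl⟩
        exact ⟨Real.rpow_nonneg hu.1 _, Real.rpow_le_one hu.1 hu.2 (by positivity)⟩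
      refine IntegrableOn.mono_set ?_ himg
      -- beta integrability on Icc 0 1
      have hIcc : Icc (0:ℝ) 1 = Icc 0 (1/2) ∪ Icc (1/2) 1 := by
        rw [Icc_union_Icc_eq_Icc] <;> norm_num
      rw [hIcc]
      apply IntegrableOn.union
      · apply IntegrableOn.mul_continuousOn
        · exact (intervalIntegrable_iff_integrableOn_Icc_of_le (by norm_num)).mp
            (intervalIntegral.intervalIntegrable_rpow' hq1)
        · exact fun x hx => ((continuous_const.sub continuous_id).continuousAt.rpow_const
            (Or.inl (by intro h; change (1:ℝ) - x = 0 at h; nlinarith [hx.1, hx.2]))).continuousWithinAt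
        · exact isCompact_Icc
      · apply IntegrableOn.continuousOn_mul
        · exact fun x hx => (Real.continuousAt_rpow_const x q
            (Or.inl (by simp at hx; intro h; nlinarith [hx.1]))).continuousWithinAt
        · have h1 : IntervalIntegrable (fun u : ℝ => (1 - u) ^ (-(1:ℝ)/2)) volume (1/2) 1 := by
            have := (intervalIntegral.intervalIntegrable_rpow'
              (a := (1/2:ℝ)) (b := (0:ℝ)) (by norm_num : (-1:ℝ) < -(1:ℝ)/2)).comp_sub_left 1
            norm_num at this ⊢
            exact this
          exact (intervalIntegrable_iff_integrableOn_Icc_of_le (by norm_num)).mp h1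
        · exact isCompact_Icc
    · rw [uIcc_of_le zero_le_one]
      apply IntegrableOn.congr_fun _ (eqOnAux hα hα1).symm measurableSet_Icc
      exact (intG2 hα).const_mul _
  have hL : ∫ u in (0:ℝ)..1, (2*α * u ^ (2*α-1)) • ((fun t : ℝ => t ^ q * (1-t) ^ (-(1:ℝ)/2)) ∘ (fun u : ℝ => u ^ (2*α))) u
      = 2*α * ∫ u in (0:ℝ)..1, u ^ α * (1 - u ^ (2*α)) ^ (-(1:ℝ)/2) := by
    rw [intervalIntegral.integral_congr (g := fun u : ℝ => 2*α * (u ^ α * (1 - u ^ (2*α)) ^ (-(1:ℝ)/2)))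
      (by rw [uIcc_of_le zero_le_one]; exact eqOnAux hα hα1), intervalIntegral.integral_const_mul]
  rw [hL] at hsub
  rw [Real.zero_rpow (by positivity : (2*α:ℝ) ≠ 0), Real.one_rpow] at hsub
  have ha : 0 < (1+α)/(2*α) := by positivity
  have hB := realBeta (a := (1+α)/(2*α)) (b := (1/2:ℝ)) ha (by norm_num)
  rw [show (1+α)/(2*α) - 1 = q from by rw [hq]; field_simp; ring,
    show ((1:ℝ)/2 - 1 : ℝ) = -(1:ℝ)/2 from by norm_num] at hB
  rw [hB] at hsub
  have hga : (1+α)/(2*α) + 1/2 = 1/(2*α) + 1 := by field_simp; ring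
  rw [hga, Real.Gamma_add_one (by positivity : (1/(2*α):ℝ) ≠ 0), Real.Gamma_one_half_eq] at hsub
  have hgpos : 0 < Real.Gamma (1/(2*α)) := Real.Gamma_pos_of_pos (by positivity)
  have hgapos : 0 < Real.Gamma ((1+α)/(2*α)) := Real.Gamma_pos_of_pos ha
  rw [eq_div_iff hgpos.ne']
  have h2 : (2*α) * ((∫ u in (0:ℝ)..1, u ^ α * (1 - u ^ (2*α)) ^ (-(1:ℝ)/2)) * Real.Gamma (1/(2*α)))
      = (2*α) * (Real.sqrt π * Real.Gamma ((1+α)/(2*α))) := by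
    field_simp at hsub ⊢
    linear_combination hsub
  exact mul_left_cancel₀ (by positivity : (2*α:ℝ) ≠ 0) h2


end FermiAux

theorem fermi_speed_limit (α : ℝ) (hα : 0 < α) (hα1 : α ≠ 1) :
    Tendsto (fun s : ℝ =>
        s ^ (1 - α) * Real.sqrt (1 - s ^ (2 * α)) +
          (1 - α) * (1 - s ^ (2 * α)) *
            ∫ u in s..(1 : ℝ), u ^ (-α) * (1 - u ^ (2 * α)) ^ (-(1 : ℝ) / 2))
      (nhdsWithin 0 (Set.Ioi 0))
      (nhds (Real.sqrt π * Real.Gamma ((1 + α) / (2 * α)) / Real.Gamma (1 / (2 * α)))) := by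
  set L := Real.sqrt π * Real.Gamma ((1 + α) / (2 * α)) / Real.Gamma (1 / (2 * α)) with hLdef
  have hval := FermiAux.value hα hα1
  have hJcont : ContinuousOn
      (fun x : ℝ => ∫ u in x..(1:ℝ), u ^ α * (1 - u ^ (2*α)) ^ (-(1:ℝ)/2)) (Icc 0 1) := by
    have h := intervalIntegral.continuousOn_primitive_interval_left
      (f := fun u : ℝ => u ^ α * (1 - u ^ (2*α)) ^ (-(1:ℝ)/2)) (a := (0:ℝ)) (b := (1:ℝ))
      (μ := volume) (by rw [uIcc_of_le zero_le_one]; exact FermiAux.intG2 hα)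
    rwa [uIcc_of_le zero_le_one] at h
  have hJ : Tendsto (fun s : ℝ => ∫ u in s..(1:ℝ), u ^ α * (1 - u ^ (2*α)) ^ (-(1:ℝ)/2))
      (nhdsWithin 0 (Set.Ioi 0)) (nhds L) := by
    have h0 := hJcont 0 ⟨le_refl 0, zero_le_one⟩
    have h1 : Tendsto (fun s : ℝ => ∫ u in s..(1:ℝ), u ^ α * (1 - u ^ (2*α)) ^ (-(1:ℝ)/2))
        (nhdsWithin 0 (Icc 0 1)) (nhds (∫ u in (0:ℝ)..(1:ℝ), u ^ α * (1 - u ^ (2*α)) ^ (-(1:ℝ)/2))) := h0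
    rw [hval] at h1
    refine h1.mono_left ?_
    rw [← nhdsWithin_Ioc_eq_nhdsGT (zero_lt_one (α := ℝ))]
    exact nhdsWithin_mono 0 Ioc_subset_Icc_self
  have hW : Tendsto (fun s : ℝ => 1 - s ^ (2*α)) (nhdsWithin 0 (Set.Ioi 0)) (nhds 1) := by
    have c : ContinuousAt (fun s : ℝ => 1 - s ^ (2*α)) 0 :=
      continuousAt_const.sub (Real.continuousAt_rpow_const 0 (2*α) (Or.inr (by positivity)))
    have h := c.tendsto.mono_left (nhdsWithin_le_nhds (s := Set.Ioi (0:ℝ)))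
    simpa [Real.zero_rpow (by positivity : (2*α:ℝ) ≠ 0)] using h
  have hT1 : Tendsto (fun s : ℝ => s ^ (1+α) * Real.sqrt (1 - s ^ (2*α)))
      (nhdsWithin 0 (Set.Ioi 0)) (nhds 0) := by
    have c1 : ContinuousAt (fun s : ℝ => s ^ (1+α)) 0 :=
      Real.continuousAt_rpow_const 0 (1+α) (Or.inr (by positivity))
    have c2 : ContinuousAt (fun s : ℝ => Real.sqrt (1 - s ^ (2*α))) 0 := by
      exact Real.continuous_sqrt.continuousAt.comp
        (continuousAt_const.sub (Real.continuousAt_rpow_const 0 (2*α) (Or.inr (by positivity))))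
    have h := (c1.mul c2).tendsto.mono_left (nhdsWithin_le_nhds (s := Set.Ioi (0:ℝ)))
    simpa [Real.zero_rpow (by positivity : (1+α:ℝ) ≠ 0), Pi.mul_def] using h
  have hmain : Tendsto (fun s : ℝ => s ^ (1+α) * Real.sqrt (1 - s ^ (2*α))
      + (1 - s ^ (2*α)) * ∫ u in s..(1:ℝ), u ^ α * (1 - u ^ (2*α)) ^ (-(1:ℝ)/2))
      (nhdsWithin 0 (Set.Ioi 0)) (nhds (0 + 1 * L)) := hT1.add (hW.mul hJ)
  rw [show (0 + 1 * L : ℝ) = L by ring] at hmain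
  refine Filter.Tendsto.congr' ?_ hmain
  filter_upwards [Ioo_mem_nhdsGT_of_mem (Set.mem_Ico.mpr ⟨le_refl (0:ℝ), zero_lt_one⟩)] with s hs
  have hftc := FermiAux.ftc hα hs
  have hpow : s ^ (1+α) = s ^ (1-α) * s ^ (2*α) := by
    rw [show (1+α : ℝ) = (1-α) + 2*α by ring, Real.rpow_add hs.1]
  rw [mul_comm (1-α) (1 - s ^ (2*α)), mul_assoc, hftc]
  linear_combination Real.sqrt (1 - s ^ (2*α)) * hpow
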